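/- Let G be a finite simple graph and let C and C' be Clar covers of G. Then V(C) ⊆ V(C') if and only if every hexagon component of C is a connected component of C' and the edge sets of C and C' coincide apart from the edges lying in hexagons of C' (i.e. E(C) \\ H' = E(C') \\ H', where H' is the union of the edge sets of the hexagon components of C'). -/
import Mathlib


open SimpleGraph Polynomial

/-- A perfect matching of `G`, given as a set of edges: a set of pairwise
disjoint edges of `G` covering every vertex, i.e. every vertex of `G` lies in
exactly one edge of `M`. -/
def IsPMSet {V : Type*} (G : SimpleGraph V) (M : Set (Sym2 V)) : Prop :=
  M ⊆ G.edgeSet ∧ ∀ v : V, ∃! e, e ∈ M ∧ v ∈ e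

/-- The edge set of a connected component `c` of `H`: all edges of `H` both of
whose endpoints lie in `c`. -/
def compEdges {V : Type*} (H : SimpleGraph V) (c : H.ConnectedComponent) : Set (Sym2 V) :=
  {e | e ∈ H.edgeSet ∧ ∀ v ∈ e, v ∈ c.supp}

/-- The component `c` of `H` is a hexagon, i.e. a cycle of length six. -/
def IsHexComp {V : Type*} (H : SimpleGraph V) (c : H.ConnectedComponent) : Prop :=
  Nonempty (H.induce c.supp ≃g cycleGraph 6)

/-- The component `c` of `H` is a single edge (a copy of `K₂`). -/
def IsEdgeComp {V : Type*} (H : SimpleGraph V) (c : H.ConnectedComponent) : Prop :=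
  Nonempty (H.induce c.supp ≃g (⊤ : SimpleGraph (Fin 2)))

/-- `H` is a Clar cover of `G`: a spanning subgraph of `G` each of whose
connected components is either a 6-cycle (called a hexagon of the cover) or a
single edge. -/
def IsClarCover {V : Type*} (G H : SimpleGraph V) : Prop :=
  H ≤ G ∧ ∀ c : H.ConnectedComponent, IsHexComp H c ∨ IsEdgeComp H c

/-- For a Clar cover `H` of `G`, the set `V(C)` of perfect matchings `M` of `G`
such that every hexagon `h` of `H` is `M`-alternating (i.e. `M ∩ E(h)` is a
perfect matching of the 6-cycle `h`) and every single-edge component of `H` is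
contained in `M`. -/
def clarVC {V : Type*} (G H : SimpleGraph V) : Set {M : Set (Sym2 V) // IsPMSet G M} :=
  {M | (∀ c : H.ConnectedComponent, IsHexComp H c →
          ∀ v ∈ c.supp, ∃! e, e ∈ M.1 ∩ compEdges H c ∧ v ∈ e) ∧
       (∀ c : H.ConnectedComponent, IsEdgeComp H c → compEdges H c ⊆ M.1)}

/-- The union of the edge sets of the hexagon components of `H`. -/
def hexEdgeUnion {V : Type*} (H : SimpleGraph V) : Set (Sym2 V) :=
  {e | ∃ c : H.ConnectedComponent, IsHexComp H c ∧ e ∈ compEdges H c}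

namespace ClarAux

variable {V : Type*} {G H H' : SimpleGraph V}

/-- The vertex map of an isomorphism from an induced component, landing in `V`. -/
def vmap {c : H.ConnectedComponent} {α : Type*} {K : SimpleGraph α}
    (ψ : H.induce c.supp ≃g K) (i : α) : V :=
  (ψ.symm i : c.supp)

lemma vmap_injective {c : H.ConnectedComponent} {α : Type*} {K : SimpleGraph α}
    (ψ : H.induce c.supp ≃g K) : Function.Injective (vmap ψ) := by
  intro i j h
  exact ψ.symm.injective (Subtype.val_injective h)

lemma range_vmap {c : H.ConnectedComponent} {α : Type*} {K : SimpleGraph α}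
    (ψ : H.induce c.supp ≃g K) : Set.range (vmap ψ) = c.supp := by
  ext v
  constructor
  · rintro ⟨i, rfl⟩; exact (ψ.symm i).2
  · intro hv
    exact ⟨ψ ⟨v, hv⟩, by simp [vmap]⟩

lemma adj_mem_compEdges {a b : V} (hab : H.Adj a b) {c : H.ConnectedComponent}
    (ha : a ∈ c.supp) : s(a, b) ∈ compEdges H c := by
  have hb : b ∈ c.supp := by
    rw [ConnectedComponent.mem_supp_iff] at ha ⊢
    rw [← ha]
    exact (SimpleGraph.ConnectedComponent.connectedComponentMk_eq_of_adj hab).symm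
  exact ⟨hab, by intro v hv; rcases Sym2.mem_iff.mp hv with rfl | rfl <;> assumption⟩

lemma mem_compEdges_of_mem_edgeSet {c : H.ConnectedComponent} :
    ∀ e ∈ H.edgeSet, ∀ v ∈ e, v ∈ c.supp → e ∈ compEdges H c := by
  intro e
  induction e using Sym2.ind with
  | _ a b =>
    intro he v hv hvc
    rcases Sym2.mem_iff.mp hv with rfl | rfl
    · exact adj_mem_compEdges he hvc
    · rw [Sym2.eq_swap]
      exact adj_mem_compEdges (H.mem_edgeSet.mp he).symm hvc

lemma compEdges_eq_image {c : H.ConnectedComponent} {α : Type*} {K : SimpleGraph α}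
    (ψ : H.induce c.supp ≃g K) :
    compEdges H c = Sym2.map (vmap ψ) '' K.edgeSet := by
  apply Set.eq_of_subset_of_subset
  · intro e
    induction e using Sym2.ind with
    | _ a b =>
      rintro ⟨hadj, hsupp⟩
      rw [mem_edgeSet] at hadj
      have ha : a ∈ c.supp := hsupp a (by simp)
      have hb : b ∈ c.supp := hsupp b (by simp)
      refine ⟨s(ψ ⟨a, ha⟩, ψ ⟨b, hb⟩), ?_, ?_⟩
      · rw [mem_edgeSet]
        exact ψ.map_adj_iff.mpr hadj
      · simp [vmap, Sym2.map_pair_eq]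
  · rintro e ⟨e₀, he₀, rfl⟩
    induction e₀ using Sym2.ind with
    | _ i j =>
      rw [mem_edgeSet] at he₀
      have hadj : (H.induce c.supp).Adj (ψ.symm i) (ψ.symm j) := ψ.symm.map_adj_iff.mpr he₀
      have hadj' : H.Adj (vmap ψ i) (vmap ψ j) := hadj
      rw [Sym2.map_pair_eq]
      exact adj_mem_compEdges hadj' ((ψ.symm i).2)

lemma cover_image {c : H.ConnectedComponent} {α : Type*} {K : SimpleGraph α}
    (ψ : H.induce c.supp ≃g K) {S : Set (Sym2 α)}
    (hcov : ∀ i : α, ∃! e, e ∈ S ∧ i ∈ e) :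
    ∀ v ∈ c.supp, ∃! e, e ∈ Sym2.map (vmap ψ) '' S ∧ v ∈ e := by
  intro v hv
  obtain ⟨i, rfl⟩ : ∃ i, vmap ψ i = v := by
    rw [← Set.mem_range, range_vmap]; exact hv
  obtain ⟨e₀, ⟨he₀S, hie₀⟩, huniq⟩ := hcov i
  refine ⟨Sym2.map (vmap ψ) e₀, ⟨⟨e₀, he₀S, rfl⟩, Sym2.mem_map.mpr ⟨i, hie₀, rfl⟩⟩, ?_⟩
  rintro e ⟨⟨e₁, he₁S, rfl⟩, hve⟩
  obtain ⟨j, hje₁, hji⟩ := Sym2.mem_map.mp hve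
  have hj : j = i := vmap_injective ψ hji
  subst hj
  rw [huniq e₁ ⟨he₁S, hje₁⟩]

def matchSet : Bool → Set (Sym2 (Fin 6))
  | false => {s(0, 1), s(2, 3), s(4, 5)}
  | true => {s(1, 2), s(3, 4), s(5, 0)}

lemma matchSet_subset (t : Bool) : matchSet t ⊆ (cycleGraph 6).edgeSet := by
  cases t <;>
  · intro e he
    simp only [matchSet, Set.mem_insert_iff, Set.mem_singleton_iff] at he
    rcases he with rfl | rfl | rfl <;> exact (mem_edgeSet _).mpr (by decide)

lemma matchSet_cover (t : Bool) : ∀ i : Fin 6, ∃! e, e ∈ matchSet t ∧ i ∈ e := by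
  cases t <;>
  · simp only [matchSet, Set.mem_insert_iff, Set.mem_singleton_iff]
    unfold ExistsUnique
    decide

lemma matchSet_union : matchSet false ∪ matchSet true = (cycleGraph 6).edgeSet := by
  ext e
  simp only [matchSet, Set.mem_union, Set.mem_insert_iff, Set.mem_singleton_iff]
  induction e using Sym2.ind with
  | _ a b =>
    rw [mem_edgeSet]
    revert a b
    decide

lemma topFin2_edgeSet : (⊤ : SimpleGraph (Fin 2)).edgeSet = {s(0, 1)} := by
  ext e
  induction e using Sym2.ind with
  | _ a b =>
    rw [mem_edgeSet, Set.mem_singleton_iff]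
    revert a b
    decide

lemma topFin2_cover : ∀ i : Fin 2, ∃! e, e ∈ (⊤ : SimpleGraph (Fin 2)).edgeSet ∧ i ∈ e := by
  rw [topFin2_edgeSet]
  simp only [Set.mem_singleton_iff]
  unfold ExistsUnique
  decide


lemma clarVC_of_family (hle : H ≤ G) (T : H.ConnectedComponent → Set (Sym2 V))
    (hT1 : ∀ c, T c ⊆ compEdges H c)
    (hT2 : ∀ c, ∀ v ∈ c.supp, ∃! e, e ∈ T c ∧ v ∈ e) :
    ∃ M : {M : Set (Sym2 V) // IsPMSet G M},
      M.1 = ⋃ c, T c ∧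
      (∀ c, ∀ v ∈ c.supp, ∃! e, e ∈ M.1 ∩ compEdges H c ∧ v ∈ e) ∧
      (∀ c, T c ⊆ M.1) := by
  set M : Set (Sym2 V) := ⋃ c, T c with hMdef
  have hTM : ∀ c, T c ⊆ M := fun c => Set.subset_iUnion T c
  have hkey : ∀ e ∈ M, ∀ v ∈ e, e ∈ T (H.connectedComponentMk v) ∧
      e ∈ compEdges H (H.connectedComponentMk v) := by
    intro e he v hv
    obtain ⟨c, hec⟩ := Set.mem_iUnion.mp he
    have hcomp : e ∈ compEdges H c := hT1 c hec
    have hvc : v ∈ c.supp := hcomp.2 v hv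
    rw [ConnectedComponent.mem_supp_iff] at hvc
    subst hvc
    exact ⟨hec, hcomp⟩
  have hpm : IsPMSet G M := by
    constructor
    · intro e he
      obtain ⟨c, hec⟩ := Set.mem_iUnion.mp he
      exact edgeSet_mono hle (hT1 c hec).1
    · intro v
      obtain ⟨e₀, ⟨he₀T, hve₀⟩, huniq⟩ := hT2 (H.connectedComponentMk v) v rfl
      refine ⟨e₀, ⟨hTM _ he₀T, hve₀⟩, ?_⟩
      rintro e ⟨heM, hve⟩
      exact huniq e ⟨(hkey e heM v hve).1, hve⟩
  refine ⟨⟨M, hpm⟩, rfl, ?_, hTM⟩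
  intro c v hv
  obtain ⟨e₀, ⟨he₀T, hve₀⟩, -⟩ := hT2 c v hv
  obtain ⟨e₁, he₁, huniq⟩ := hpm.2 v
  refine ⟨e₀, ⟨⟨hTM _ he₀T, hT1 c he₀T⟩, hve₀⟩, ?_⟩
  rintro e ⟨⟨heM, -⟩, hve⟩
  rw [huniq e ⟨heM, hve⟩, huniq e₀ ⟨hTM _ he₀T, hve₀⟩]

lemma exists_local (hcomp : ∀ c : H.ConnectedComponent, IsHexComp H c ∨ IsEdgeComp H c)
    (c : H.ConnectedComponent) :
    ∃ S : Set (Sym2 V), S ⊆ compEdges H c ∧ (∀ v ∈ c.supp, ∃! e, e ∈ S ∧ v ∈ e) ∧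
      (IsEdgeComp H c → compEdges H c ⊆ S) := by
  classical
  by_cases hE : IsEdgeComp H c
  · obtain ⟨ψ⟩ := hE
    refine ⟨compEdges H c, le_refl _, ?_, fun _ => le_refl _⟩
    rw [compEdges_eq_image ψ]
    exact cover_image ψ topFin2_cover
  · obtain ⟨ψ⟩ := (hcomp c).resolve_right hE
    refine ⟨Sym2.map (vmap ψ) '' matchSet false, ?_, ?_, fun h => absurd h hE⟩
    · rw [compEdges_eq_image ψ]
      exact Set.image_mono (matchSet_subset false)
    · exact cover_image ψ (matchSet_cover false)

lemma clarVC_of_family' (hle : H ≤ G) (T : H.ConnectedComponent → Set (Sym2 V))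
    (hT1 : ∀ c, T c ⊆ compEdges H c)
    (hT2 : ∀ c, ∀ v ∈ c.supp, ∃! e, e ∈ T c ∧ v ∈ e)
    (hT3 : ∀ c, IsEdgeComp H c → compEdges H c ⊆ T c) :
    ∃ M ∈ clarVC G H, ∀ c, T c ⊆ M.1 := by
  obtain ⟨M, -, hhex, hTM⟩ := clarVC_of_family hle T hT1 hT2
  refine ⟨M, ⟨fun c _ v hv => hhex c v hv, fun c hc => (hT3 c hc).trans (hTM c)⟩, hTM⟩

lemma exists_clarVC (hle : H ≤ G)
    (hcomp : ∀ c : H.ConnectedComponent, IsHexComp H c ∨ IsEdgeComp H c) :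
    ∃ M, M ∈ clarVC G H := by
  choose S hS1 hS2 hS3 using exists_local (H := H) hcomp
  obtain ⟨M, hM, -⟩ := clarVC_of_family' hle S hS1 hS2 hS3
  exact ⟨M, hM⟩

lemma exists_clarVC_extending (hle : H ≤ G)
    (hcomp : ∀ c : H.ConnectedComponent, IsHexComp H c ∨ IsEdgeComp H c)
    (c₀ : H.ConnectedComponent) (S₀ : Set (Sym2 V))
    (h1 : S₀ ⊆ compEdges H c₀)
    (h2 : ∀ v ∈ c₀.supp, ∃! e, e ∈ S₀ ∧ v ∈ e)
    (h3 : IsEdgeComp H c₀ → compEdges H c₀ ⊆ S₀) :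
    ∃ M ∈ clarVC G H, S₀ ⊆ M.1 := by
  classical
  choose S hS1 hS2 hS3 using exists_local (H := H) hcomp
  set T : H.ConnectedComponent → Set (Sym2 V) := fun c => if c = c₀ then S₀ else S c with hT
  have hT0 : T c₀ = S₀ := by simp [hT]
  have hT1 : ∀ c, T c ⊆ compEdges H c := by
    intro c
    by_cases h : c = c₀
    · subst h; simpa [hT] using h1
    · simpa [hT, h] using hS1 c
  have hT2 : ∀ c, ∀ v ∈ c.supp, ∃! e, e ∈ T c ∧ v ∈ e := by
    intro c
    by_cases h : c = c₀
    · subst h; simpa [hT] using h2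
    · simpa [hT, h] using hS2 c
  have hT3 : ∀ c, IsEdgeComp H c → compEdges H c ⊆ T c := by
    intro c
    by_cases h : c = c₀
    · subst h; simpa [hT] using h3
    · simpa [hT, h] using hS3 c
  obtain ⟨M, hM, hTM⟩ := clarVC_of_family' hle T hT1 hT2 hT3
  exact ⟨M, hM, hT0 ▸ hTM c₀⟩


lemma clarVC_edge_mem_comp
    (hcomp : ∀ c : H.ConnectedComponent, IsHexComp H c ∨ IsEdgeComp H c)
    {M : {M : Set (Sym2 V) // IsPMSet G M}} (hM : M ∈ clarVC G H) :
    ∀ e ∈ M.1, ∀ v ∈ e, e ∈ compEdges H (H.connectedComponentMk v) := by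
  intro e he v hv
  set c := H.connectedComponentMk v with hc
  have hvc : v ∈ c.supp := rfl
  have hex : ∃ f, (f ∈ M.1 ∧ v ∈ f) ∧ f ∈ compEdges H c := by
    rcases hcomp c with hhex | hedge
    · obtain ⟨f, ⟨⟨hfM, hfc⟩, hvf⟩, -⟩ := hM.1 c hhex v hvc
      exact ⟨f, ⟨hfM, hvf⟩, hfc⟩
    · obtain ⟨ψ⟩ := hedge
      have hcover := cover_image ψ topFin2_cover v hvc
      rw [← compEdges_eq_image ψ] at hcover
      obtain ⟨f, ⟨hfc, hvf⟩, -⟩ := hcover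
      exact ⟨f, ⟨hM.2 c ⟨ψ⟩ hfc, hvf⟩, hfc⟩
  obtain ⟨f, hf, hfc⟩ := hex
  have := (M.2.2 v).unique ⟨he, hv⟩ hf
  rw [this]
  exact hfc

lemma clarVC_subset_edgeSet
    (hcomp : ∀ c : H.ConnectedComponent, IsHexComp H c ∨ IsEdgeComp H c)
    {M : {M : Set (Sym2 V) // IsPMSet G M}} (hM : M ∈ clarVC G H) :
    M.1 ⊆ H.edgeSet := by
  intro e he
  exact (clarVC_edge_mem_comp hcomp hM e he e.out.1 (Sym2.out_fst_mem e)).1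

lemma not_hex_and_edge {c : H.ConnectedComponent} (h1 : IsHexComp H c)
    (h2 : IsEdgeComp H c) : False := by
  obtain ⟨ψ⟩ := h1
  obtain ⟨φ⟩ := h2
  have := Fintype.card_congr (ψ.toEquiv.symm.trans φ.toEquiv)
  simp [Fintype.card_fin] at this

lemma hex_of_eq {c : H.ConnectedComponent} {c' : H'.ConnectedComponent}
    (hs : c'.supp = c.supp) (he : compEdges H' c' = compEdges H c)
    (hc : IsHexComp H c) : IsHexComp H' c' := by
  obtain ⟨ψ⟩ := hc
  have key : ∀ a b : V, a ∈ c'.supp → b ∈ c'.supp → (H.Adj a b ↔ H'.Adj a b) := by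
    intro a b ha hb
    constructor
    · intro h
      have hm : s(a, b) ∈ compEdges H c := adj_mem_compEdges h (hs ▸ ha)
      rw [← he] at hm
      exact hm.1
    · intro h
      have hm : s(a, b) ∈ compEdges H' c' := adj_mem_compEdges h ha
      rw [he] at hm
      exact hm.1
  have iso1 : H'.induce c'.supp ≃g H.induce c.supp :=
    ⟨Equiv.setCongr hs, by
      intro x y
      simp only [Equiv.setCongr_apply, comap_adj, Function.comp_apply,
        Function.Embedding.coe_subtype]
      exact key x y x.2 y.2⟩
  exact ⟨iso1.trans ψ⟩


lemma hex_transfer [Fintype V] (hle : H ≤ G)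
    (hcomp : ∀ c : H.ConnectedComponent, IsHexComp H c ∨ IsEdgeComp H c)
    (hle' : H' ≤ G)
    (hcomp' : ∀ c : H'.ConnectedComponent, IsHexComp H' c ∨ IsEdgeComp H' c)
    (hsub : clarVC G H ⊆ clarVC G H')
    {c : H.ConnectedComponent} (hc : IsHexComp H c) :
    ∃ c' : H'.ConnectedComponent, IsHexComp H' c' ∧ c'.supp = c.supp ∧
      compEdges H' c' = compEdges H c := by
  classical
  obtain ⟨ψ⟩ := hc
  set f := vmap ψ with hf
  have hedge : ¬ IsEdgeComp H c := fun h => not_hex_and_edge ⟨ψ⟩ h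
  have hgetM : ∀ t : Bool, ∃ M ∈ clarVC G H, Sym2.map f '' matchSet t ⊆ M.1 := by
    intro t
    refine exists_clarVC_extending hle hcomp c _ ?_ (cover_image ψ (matchSet_cover t))
      (fun h => absurd h hedge)
    rw [compEdges_eq_image ψ]
    exact Set.image_mono (matchSet_subset t)
  obtain ⟨M₁, hM₁, hS₁⟩ := hgetM false
  obtain ⟨M₂, hM₂, hS₂⟩ := hgetM true
  have hcE : compEdges H c ⊆ H'.edgeSet := by
    rw [compEdges_eq_image ψ, ← matchSet_union, Set.image_union]
    rintro e (he | he)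
    · exact clarVC_subset_edgeSet hcomp' (hsub hM₁) (hS₁ he)
    · exact clarVC_subset_edgeSet hcomp' (hsub hM₂) (hS₂ he)
  have hadjH' : ∀ i j : Fin 6, (cycleGraph 6).Adj i j → H'.Adj (f i) (f j) := by
    intro i j hij
    have hm : s(f i, f j) ∈ compEdges H c := by
      rw [compEdges_eq_image ψ]
      exact ⟨s(i, j), (mem_edgeSet _).mpr hij, Sym2.map_pair_eq f i j⟩
    exact hcE hm
  set c' := H'.connectedComponentMk (f 0) with hc'
  have hmk : ∀ i : Fin 6, H'.connectedComponentMk (f i) = c' := by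
    have e01 := ConnectedComponent.connectedComponentMk_eq_of_adj (hadjH' 0 1 (by decide))
    have e12 := ConnectedComponent.connectedComponentMk_eq_of_adj (hadjH' 1 2 (by decide))
    have e23 := ConnectedComponent.connectedComponentMk_eq_of_adj (hadjH' 2 3 (by decide))
    have e34 := ConnectedComponent.connectedComponentMk_eq_of_adj (hadjH' 3 4 (by decide))
    have e45 := ConnectedComponent.connectedComponentMk_eq_of_adj (hadjH' 4 5 (by decide))
    intro i
    fin_cases i
    · rfl
    · exact e01.symm
    · exact (e12.symm).trans e01.symm
    · exact (e23.symm).trans ((e12.symm).trans e01.symm)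
    · exact (e34.symm).trans ((e23.symm).trans ((e12.symm).trans e01.symm))
    · exact (e45.symm).trans ((e34.symm).trans ((e23.symm).trans ((e12.symm).trans e01.symm)))
  have hmem : ∀ i : Fin 6, f i ∈ c'.supp := by
    intro i
    rw [ConnectedComponent.mem_supp_iff]
    exact hmk i
  have hc'hex : IsHexComp H' c' := by
    rcases hcomp' c' with h | h
    · exact h
    · exfalso
      obtain ⟨φ⟩ := h
      have hinj : Function.Injective (fun i : Fin 6 => φ ⟨f i, hmem i⟩) := by
        intro i j hij
        have h2 := congrArg Subtype.val (φ.injective hij)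
        exact vmap_injective ψ h2
      have := Fintype.card_le_of_injective _ hinj
      simp [Fintype.card_fin] at this
  obtain ⟨φ⟩ := hc'hex
  have hrange : ∀ {g : Fin 6 → V}, Function.Injective g → (Set.range g).ncard = 6 := by
    intro g hg
    rw [← Set.image_univ, Set.ncard_image_of_injective _ hg, Set.ncard_univ]
    simp
  have hsupp : c'.supp = c.supp := by
    have hsub1 : c.supp ⊆ c'.supp := by
      rw [← range_vmap ψ]
      rintro v ⟨i, rfl⟩
      exact hmem i
    refine (Set.eq_of_subset_of_ncard_le hsub1 ?_ (Set.toFinite _)).symm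
    rw [← range_vmap ψ, ← range_vmap φ, hrange (vmap_injective φ),
      hrange (vmap_injective ψ)]
  have hsubE : compEdges H c ⊆ compEdges H' c' := by
    intro e he
    refine ⟨hcE he, ?_⟩
    intro v hv
    rw [hsupp]
    exact he.2 v hv
  have hEq : compEdges H' c' = compEdges H c := by
    refine (Set.eq_of_subset_of_ncard_le hsubE ?_ (Set.toFinite _)).symm
    rw [compEdges_eq_image ψ, compEdges_eq_image φ,
      Set.ncard_image_of_injective _ (Sym2.map.injective (vmap_injective ψ)),
      Set.ncard_image_of_injective _ (Sym2.map.injective (vmap_injective φ))]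
  exact ⟨c', ⟨φ⟩, hsupp, hEq⟩

end ClarAux

open ClarAux

/-- For Clar covers `C` and `C'` of a finite simple graph `G`,
`V(C) ⊆ V(C')` iff every hexagon component of `C` is a connected component of
`C'` and the edge sets of `C` and `C'` coincide apart from the edges lying in
hexagons of `C'`. -/
theorem clarVC_subset_iff {V : Type*} [Fintype V] (G : SimpleGraph V)
    (H H' : SimpleGraph V) (hH : IsClarCover G H) (hH' : IsClarCover G H') :
    clarVC G H ⊆ clarVC G H' ↔
      ((∀ c : H.ConnectedComponent, IsHexComp H c →
          ∃ c' : H'.ConnectedComponent, c'.supp = c.supp ∧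
            compEdges H' c' = compEdges H c) ∧
        H.edgeSet \ hexEdgeUnion H' = H'.edgeSet \ hexEdgeUnion H') := by
  classical
  obtain ⟨hleH, hcompH⟩ := hH
  obtain ⟨hleH', hcompH'⟩ := hH'
  constructor
  · intro hsub
    constructor
    · intro c hc
      obtain ⟨c', -, hs, he⟩ := hex_transfer hleH hcompH hleH' hcompH' hsub hc
      exact ⟨c', hs, he⟩
    · ext e
      simp only [Set.mem_diff]
      constructor
      · rintro ⟨heH, heX⟩
        refine ⟨?_, heX⟩
        have hv : e.out.1 ∈ e := Sym2.out_fst_mem e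
        have hc : e ∈ compEdges H (H.connectedComponentMk e.out.1) :=
          mem_compEdges_of_mem_edgeSet e heH e.out.1 hv rfl
        rcases hcompH (H.connectedComponentMk e.out.1) with hhex | hedge
        · obtain ⟨c', hc'hex, -, hE⟩ := hex_transfer hleH hcompH hleH' hcompH' hsub hhex
          exact absurd ⟨c', hc'hex, hE ▸ hc⟩ heX
        · obtain ⟨M, hM⟩ := exists_clarVC hleH hcompH
          have heM : e ∈ M.1 := hM.2 _ hedge hc
          exact clarVC_subset_edgeSet hcompH' (hsub hM) heM
      · rintro ⟨heH', heX⟩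
        refine ⟨?_, heX⟩
        have hv : e.out.1 ∈ e := Sym2.out_fst_mem e
        have hc : e ∈ compEdges H' (H'.connectedComponentMk e.out.1) :=
          mem_compEdges_of_mem_edgeSet e heH' e.out.1 hv rfl
        rcases hcompH' (H'.connectedComponentMk e.out.1) with hhex | hedge
        · exact absurd ⟨_, hhex, hc⟩ heX
        · obtain ⟨M, hM⟩ := exists_clarVC hleH hcompH
          have heM : e ∈ M.1 := (hsub hM).2 _ hedge hc
          exact clarVC_subset_edgeSet hcompH hM heM
  · rintro ⟨h1, h2⟩ M hM
    have hME : M.1 ⊆ H.edgeSet := clarVC_subset_edgeSet hcompH hM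
    constructor
    · intro c' _ v hv
      obtain ⟨e₀, ⟨he₀M, hve₀⟩, huniq⟩ := M.2.2 v
      have he₀H' : e₀ ∈ H'.edgeSet := by
        by_cases hX : e₀ ∈ hexEdgeUnion H'
        · obtain ⟨c'', -, hc''⟩ := hX
          exact hc''.1
        · have hm : e₀ ∈ H.edgeSet \ hexEdgeUnion H' := ⟨hME he₀M, hX⟩
          rw [h2] at hm
          exact hm.1
      have he₀c' : e₀ ∈ compEdges H' c' :=
        mem_compEdges_of_mem_edgeSet e₀ he₀H' v hve₀ hv
      refine ⟨e₀, ⟨⟨he₀M, he₀c'⟩, hve₀⟩, ?_⟩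
      rintro e ⟨⟨heM, -⟩, hve⟩
      exact huniq e ⟨heM, hve⟩
    · intro c' hc' e he
      have heX : e ∉ hexEdgeUnion H' := by
        rintro ⟨c'', hc''hex, hec''⟩
        have hv : e.out.1 ∈ e := Sym2.out_fst_mem e
        have hcc : c'' = c' := by
          have ha := hec''.2 e.out.1 hv
          have hb := he.2 e.out.1 hv
          rw [ConnectedComponent.mem_supp_iff] at ha hb
          exact ha.symm.trans hb
        subst hcc
        exact not_hex_and_edge hc''hex hc'
      have heH : e ∈ H.edgeSet := by
        have hm : e ∈ H'.edgeSet \ hexEdgeUnion H' := ⟨he.1, heX⟩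
        rw [← h2] at hm
        exact hm.1
      have hv : e.out.1 ∈ e := Sym2.out_fst_mem e
      have hcv : e ∈ compEdges H (H.connectedComponentMk e.out.1) :=
        mem_compEdges_of_mem_edgeSet e heH e.out.1 hv rfl
      rcases hcompH (H.connectedComponentMk e.out.1) with hhex | hedge
      · exfalso
        obtain ⟨c₂, hs, hE⟩ := h1 _ hhex
        exact heX ⟨c₂, hex_of_eq hs hE hhex, hE ▸ hcv⟩
      · exact hM.2 _ hedge hcv
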